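/- Let 𝒴 ⊆ ℂⁿ be a p-dimensional subspace, let i ∈ {1, …, p}, and define 𝒴_{[1,i]∪(p,n]} = span{x_{i+1}, …, x_p}^⊥ ∩ 𝒴. Then dim 𝒴_{[1,i]∪(p,n]} ≥ i. If moreover the smallest Ritz value η_p of A in 𝒴 satisfies η_p > λ_{p+1}, then dim 𝒴_{[1,i]∪(p,n]} = i and the image of 𝒴_{[1,i]∪(p,n]} under the orthogonal projection onto 𝒳 = span{x₁, …, x_p} equals span{x₁, …, x_i}. If in addition f : ℝ → ℝ satisfies f(λⱼ) ≠ 0 for every j ∈ {1, …, i}, then f(A)𝒴_{[1,i]∪(p,n]} also has dimension i. -/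

import Mathlib

open scoped InnerProductSpace
open Module


/-- The Rayleigh quotient `ρ(v) = (vᴴAv)/(vᴴv)` of the Hermitian matrix `A`. -/
noncomputable def rayleigh {n : ℕ} (A : Matrix (Fin n) (Fin n) ℂ)
    (v : EuclideanSpace ℂ (Fin n)) : ℝ :=
  ((inner ℂ v (Matrix.toEuclideanLin A v) : ℂ)).re / ‖v‖ ^ 2

/-- The `i`-th largest Ritz value (1-indexed, `i ∈ {1, …, dim S}`) of the Hermitian
matrix `A` in the subspace `S`, characterized via the Courant–Fischer max-min
principle applied inside `S` (equivalently, the `i`-th largest eigenvalue of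
`SᴴAS` for any orthonormal basis matrix `S`). -/
noncomputable def ritzValue {n : ℕ} (A : Matrix (Fin n) (Fin n) ℂ)
    (S : Submodule ℂ (EuclideanSpace ℂ (Fin n))) (i : ℕ) : ℝ :=
  sSup {r : ℝ | ∃ T : Submodule ℂ (EuclideanSpace ℂ (Fin n)), T ≤ S ∧
    Module.finrank ℂ T = i ∧ ∀ v ∈ T, v ≠ 0 → r ≤ rayleigh A v}

/-- `f(A) = ∑ j, f(λ_j) x_j x_jᴴ` as a linear operator, for eigenvalues `lam`
and orthonormal eigenvectors `x` of `A`. -/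
noncomputable def matFun {n : ℕ} (lam : Fin n → ℝ)
    (x : Fin n → EuclideanSpace ℂ (Fin n)) (f : ℝ → ℝ) :
    EuclideanSpace ℂ (Fin n) →ₗ[ℂ] EuclideanSpace ℂ (Fin n) :=
  ∑ j : Fin n, (f (lam j) : ℂ) • ((innerSL ℂ (x j)).toLinearMap.smulRight (x j))

/-- `y` is a Ritz vector of `A` in `S` associated with the Ritz value `η`:
`y ∈ S`, `y ≠ 0`, `ρ(y) = η` and `Ay − ηy ⊥ S`. -/
def IsRitzVector {n : ℕ} (A : Matrix (Fin n) (Fin n) ℂ)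
    (S : Submodule ℂ (EuclideanSpace ℂ (Fin n))) (η : ℝ)
    (y : EuclideanSpace ℂ (Fin n)) : Prop :=
  y ∈ S ∧ y ≠ 0 ∧ rayleigh A y = η ∧
    ∀ v ∈ S, (inner ℂ v (Matrix.toEuclideanLin A y - (η : ℂ) • y) : ℂ) = 0

section Aux

lemma aux_mem_orth_span_iff {E : Type*} [NormedAddCommGroup E] [InnerProductSpace ℂ E]
    (s : Set E) (v : E) :
    v ∈ (Submodule.span ℂ s)ᗮ ↔ ∀ u ∈ s, (inner ℂ u v : ℂ) = 0 := by
  constructor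
  · intro h u hu
    exact (Submodule.mem_orthogonal _ _).1 h u (Submodule.subset_span hu)
  · intro h
    rw [Submodule.mem_orthogonal]
    intro u hu
    induction hu using Submodule.span_induction with
    | mem w hw => exact h w hw
    | zero => simp
    | add a b _ _ ha hb => simp [inner_add_left, ha, hb]
    | smul c a _ ha => simp [inner_smul_left, ha]

variable {n : ℕ} (A : Matrix (Fin n) (Fin n) ℂ) (hA : A.IsHermitian)
  (lam : Fin n → ℝ) (x : Fin n → EuclideanSpace ℂ (Fin n))
  (heig : ∀ j, Matrix.toEuclideanLin A (x j) = (lam j : ℂ) • x j)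

noncomputable def auxONB (hon : Orthonormal ℂ x) :
    OrthonormalBasis (Fin n) ℂ (EuclideanSpace ℂ (Fin n)) :=
  OrthonormalBasis.mk hon (by
    refine le_of_eq (Submodule.eq_top_of_finrank_eq ?_).symm
    rw [finrank_span_eq_card hon.linearIndependent]
    simp)

lemma auxONB_apply (hon : Orthonormal ℂ x) (j : Fin n) : auxONB x hon j = x j := by
  simp [auxONB]

lemma aux_norm_sq (hon : Orthonormal ℂ x) (v : EuclideanSpace ℂ (Fin n)) :
    ‖v‖ ^ 2 = ∑ j, ‖(inner ℂ (x j) v : ℂ)‖ ^ 2 := by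
  classical
  have h := (auxONB x hon).repr.norm_map v
  have h2 : ‖(auxONB x hon).repr v‖ ^ 2 = ∑ j, ‖(auxONB x hon).repr v j‖ ^ 2 := by
    rw [EuclideanSpace.norm_eq, Real.sq_sqrt (by positivity)]
  rw [← h, h2]
  refine Finset.sum_congr rfl fun j _ => ?_
  rw [(auxONB x hon).repr_apply_apply, auxONB_apply]

include hA heig in
lemma aux_inner_A (hon : Orthonormal ℂ x) (v : EuclideanSpace ℂ (Fin n)) :
    ((inner ℂ v (Matrix.toEuclideanLin A v) : ℂ)).re
      = ∑ j, lam j * ‖(inner ℂ (x j) v : ℂ)‖ ^ 2 := by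
  classical
  set b := auxONB x hon with hb
  have hsymm := (Matrix.isHermitian_iff_isSymmetric.1 hA)
  have hrepr : ∀ j, b.repr (Matrix.toEuclideanLin A v) j = (lam j : ℂ) * b.repr v j := by
    intro j
    rw [b.repr_apply_apply, b.repr_apply_apply, auxONB_apply, ← hsymm (x j) v, heig j,
      inner_smul_left]
    simp [mul_comm]
  have him := b.repr.inner_map_map v (Matrix.toEuclideanLin A v)
  rw [← him, PiLp.inner_apply, Complex.re_sum]
  refine Finset.sum_congr rfl fun j _ => ?_
  rw [hrepr j, RCLike.inner_apply]
  have : (lam j : ℂ) * b.repr v j * (starRingEnd ℂ) (b.repr v j)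
      = (lam j : ℂ) * ((starRingEnd ℂ) (b.repr v j) * b.repr v j) := by ring
  rw [this, RCLike.conj_mul]
  have hb2 : b.repr v j = (inner ℂ (x j) v : ℂ) := by
    rw [b.repr_apply_apply, auxONB_apply]
  rw [hb2]
  simp [Complex.mul_re, ← Complex.ofReal_pow]

include hA heig in
lemma aux_rayleigh_le (hon : Orthonormal ℂ x) (hlam : Antitone lam) {p : ℕ} (hpn : p < n)
    {v : EuclideanSpace ℂ (Fin n)} (hv : v ≠ 0)
    (hc : ∀ j : Fin n, (j : ℕ) < p → (inner ℂ (x j) v : ℂ) = 0) :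
    rayleigh A v ≤ lam ⟨p, hpn⟩ := by
  have hns : (0:ℝ) < ‖v‖ ^ 2 := by
    have := norm_pos_iff.2 hv
    positivity
  rw [rayleigh, div_le_iff₀ hns, aux_inner_A A hA lam x heig hon,
    aux_norm_sq x hon, Finset.mul_sum]
  refine Finset.sum_le_sum fun j _ => ?_
  by_cases hj : (j : ℕ) < p
  · simp [hc j hj]
  · have hle : lam j ≤ lam ⟨p, hpn⟩ := hlam (by rw [Fin.le_def]; simpa using Nat.le_of_not_lt hj)
    exact mul_le_mul_of_nonneg_right hle (by positivity)

include hA heig in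
lemma aux_rayleigh_ge (hon : Orthonormal ℂ x) (hlam : Antitone lam) (hn : 0 < n)
    {v : EuclideanSpace ℂ (Fin n)} (hv : v ≠ 0) :
    lam ⟨n - 1, by omega⟩ ≤ rayleigh A v := by
  have hns : (0:ℝ) < ‖v‖ ^ 2 := by
    have := norm_pos_iff.2 hv
    positivity
  rw [rayleigh, le_div_iff₀ hns, aux_inner_A A hA lam x heig hon,
    aux_norm_sq x hon, Finset.mul_sum]
  refine Finset.sum_le_sum fun j _ => ?_
  have hle : lam ⟨n - 1, by omega⟩ ≤ lam j := by
    refine hlam ?_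
    rw [Fin.le_def]
    have := j.isLt
    simpa using by omega
  exact mul_le_mul_of_nonneg_right hle (by positivity)

lemma aux_mem_span_of_inner (hon : Orthonormal ℂ x) (s : Set (Fin n))
    (u : EuclideanSpace ℂ (Fin n))
    (h : ∀ j : Fin n, j ∉ s → (inner ℂ (x j) u : ℂ) = 0) :
    u ∈ Submodule.span ℂ (x '' s) := by
  classical
  have hu : u = ∑ j, (inner ℂ (x j) u : ℂ) • x j := by
    have := (auxONB x hon).sum_repr' u
    simp only [auxONB_apply] at this
    exact this.symm
  rw [hu]
  refine Submodule.sum_mem _ fun j _ => ?_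
  by_cases hj : j ∈ s
  · exact Submodule.smul_mem _ _ (Submodule.subset_span ⟨j, hj, rfl⟩)
  · rw [h j hj, zero_smul]
    exact Submodule.zero_mem _

lemma aux_finrank_span_le (s : Finset (Fin n)) :
    finrank ℂ (Submodule.span ℂ (x '' ↑s)) ≤ s.card := by
  classical
  have himg : x '' ↑s = ↑(s.image x) := by
    simp [Finset.coe_image]
  rw [himg]
  exact (finrank_span_finset_le_card _).trans Finset.card_image_le

end Aux

/-- For `𝒴̃ = span{x_{i+1},…,x_p}^⊥ ∩ 𝒴` one has `dim 𝒴̃ ≥ i`;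
if moreover `η_p > λ_{p+1}` then `dim 𝒴̃ = i` and the image of `𝒴̃` under the
orthogonal projection onto `𝒳 = span{x₁,…,x_p}` equals `span{x₁,…,x_i}`; if in
addition `f(λ_j) ≠ 0` for `j ∈ {1,…,i}` then `f(A)𝒴̃` also has dimension `i`.
(0-indexed: `lam ⟨j⟩` is `λ_{j+1}`.) -/
theorem stmt8 {n p i : ℕ} (hi : 1 ≤ i) (hip : i ≤ p) (hpn : p < n)
    (A : Matrix (Fin n) (Fin n) ℂ) (hA : A.IsHermitian)
    (lam : Fin n → ℝ) (hlam : Antitone lam)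
    (x : Fin n → EuclideanSpace ℂ (Fin n)) (hx : Orthonormal ℂ x)
    (heig : ∀ j, Matrix.toEuclideanLin A (x j) = (lam j : ℂ) • x j)
    (Y : Submodule ℂ (EuclideanSpace ℂ (Fin n))) (hY : Module.finrank ℂ Y = p)
    (f : ℝ → ℝ)
    (Yt : Submodule ℂ (EuclideanSpace ℂ (Fin n)))
    (hYt : Yt = (Submodule.span ℂ (x '' {j | i ≤ (j : ℕ) ∧ (j : ℕ) < p}))ᗮ ⊓ Y) :
    i ≤ Module.finrank ℂ Yt ∧
    (lam ⟨p, hpn⟩ < ritzValue A Y p →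
      (Module.finrank ℂ Yt = i ∧
        Submodule.map
          (((Submodule.span ℂ (x '' {j | (j : ℕ) < p})).subtypeL.comp
            (Submodule.orthogonalProjectionOnto (Submodule.span ℂ (x '' {j | (j : ℕ) < p})))).toLinearMap)
          Yt = Submodule.span ℂ (x '' {j | (j : ℕ) < i})) ∧
      ((∀ j : Fin n, (j : ℕ) < i → f (lam j) ≠ 0) →
        Module.finrank ℂ (Yt.map (matFun lam x f)) = i)) := by
  classical
  have hn : 0 < n := lt_of_le_of_lt (Nat.zero_le p) hpn
  set W := Submodule.span ℂ (x '' {j : Fin n | i ≤ (j : ℕ) ∧ (j : ℕ) < p}) with hWdef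
  set X := Submodule.span ℂ (x '' {j : Fin n | (j : ℕ) < p}) with hXdef
  set Xi := Submodule.span ℂ (x '' {j : Fin n | (j : ℕ) < i}) with hXidef
  -- finrank bounds on the spans
  have hWcard : finrank ℂ W ≤ p - i := by
    have hset : {j : Fin n | i ≤ (j : ℕ) ∧ (j : ℕ) < p}
        = ↑(Finset.univ.filter fun j : Fin n => i ≤ (j : ℕ) ∧ (j : ℕ) < p) := by
      ext j; simp
    rw [hWdef, hset]
    refine (aux_finrank_span_le x _).trans ?_
    have hle := Finset.card_le_card_of_injOn (t := Finset.Ico i p)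
      (s := Finset.univ.filter fun j : Fin n => i ≤ (j : ℕ) ∧ (j : ℕ) < p)
      (fun j : Fin n => (j : ℕ))
      (by intro a ha; simp at ha ⊢; omega)
      (by intro a _ b _ h; exact Fin.val_injective h)
    simpa [Nat.card_Ico] using hle
  have hXicard : finrank ℂ Xi ≤ i := by
    have hset : {j : Fin n | (j : ℕ) < i}
        = ↑(Finset.univ.filter fun j : Fin n => (j : ℕ) < i) := by
      ext j; simp
    rw [hXidef, hset]
    refine (aux_finrank_span_le x _).trans ?_
    have hle := Finset.card_le_card_of_injOn (t := Finset.range i)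
      (s := Finset.univ.filter fun j : Fin n => (j : ℕ) < i)
      (fun j : Fin n => (j : ℕ))
      (by intro a ha; simp at ha ⊢; omega)
      (by intro a _ b _ h; exact Fin.val_injective h)
    simpa using hle
  -- Part 1: i ≤ finrank Yt
  have hpart1 : i ≤ finrank ℂ Yt := by
    have horth : finrank ℂ W + finrank ℂ Wᗮ = n := by
      rw [Submodule.finrank_add_finrank_orthogonal, finrank_euclideanSpace_fin]
    have hsup : finrank ℂ (Wᗮ ⊔ Y : Submodule ℂ (EuclideanSpace ℂ (Fin n)))
        + finrank ℂ (Wᗮ ⊓ Y : Submodule ℂ (EuclideanSpace ℂ (Fin n)))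
        = finrank ℂ Wᗮ + finrank ℂ Y :=
      Submodule.finrank_sup_add_finrank_inf_eq Wᗮ Y
    have hsuple : finrank ℂ (Wᗮ ⊔ Y : Submodule ℂ (EuclideanSpace ℂ (Fin n))) ≤ n := by
      have := Submodule.finrank_le (Wᗮ ⊔ Y : Submodule ℂ (EuclideanSpace ℂ (Fin n)))
      rwa [finrank_euclideanSpace_fin] at this
    rw [hYt]
    omega
  refine ⟨hpart1, fun hη => ?_⟩
  have hYtY : Yt ≤ Y := hYt ▸ inf_le_right
  have hYtW : Yt ≤ Wᗮ := hYt ▸ inf_le_left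
  -- Every nonzero v in Y has Rayleigh quotient > lam p
  have HY : ∀ v ∈ Y, v ≠ 0 → lam ⟨p, hpn⟩ < rayleigh A v := by
    simp only [ritzValue] at hη
    have hne : {r : ℝ | ∃ T : Submodule ℂ (EuclideanSpace ℂ (Fin n)), T ≤ Y ∧
        Module.finrank ℂ T = p ∧ ∀ v ∈ T, v ≠ 0 → r ≤ rayleigh A v}.Nonempty := by
      refine ⟨lam ⟨n - 1, by omega⟩, Y, le_refl Y, hY, fun v hv hv0 => ?_⟩
      exact aux_rayleigh_ge A hA lam x heig hx hlam hn hv0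
    obtain ⟨r, hrmem, hr⟩ := exists_lt_of_lt_csSup hne hη
    obtain ⟨T, hTY, hTrank, hTbound⟩ := hrmem
    have hTeq : T = Y := Submodule.eq_of_le_of_finrank_le hTY (by rw [hY, hTrank])
    intro v hv hv0
    exact lt_of_lt_of_le hr (hTbound v (hTeq ▸ hv) hv0)
  -- Y ∩ Xᗮ = 0
  have hXker : ∀ v, v ∈ Y → v ∈ Xᗮ → v = 0 := by
    intro v hvY hvX
    by_contra hv0
    have h1 := HY v hvY hv0
    have hc : ∀ j : Fin n, (j : ℕ) < p → (inner ℂ (x j) v : ℂ) = 0 := by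
      intro j hj
      exact (aux_mem_orth_span_iff _ v).1 hvX (x j) ⟨j, hj, rfl⟩
    have h2 := aux_rayleigh_le A hA lam x heig hx hlam hpn hv0 hc
    linarith
  set P := ((X.subtypeL.comp (X.orthogonalProjectionOnto)).toLinearMap :
      EuclideanSpace ℂ (Fin n) →ₗ[ℂ] EuclideanSpace ℂ (Fin n)) with hPdef
  have hPapply : ∀ v, P v = (X.orthogonalProjectionOnto v : EuclideanSpace ℂ (Fin n)) := by
    intro v; simp [hPdef]
  have hPsub : ∀ v, v - P v ∈ Xᗮ := by
    intro v
    rw [hPapply]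
    exact X.sub_starProjection_mem_orthogonal v
  have hPmem : ∀ v, P v ∈ X := by
    intro v; rw [hPapply]; exact (X.orthogonalProjectionOnto v).2
  -- injectivity of P on Yt
  have hPinj : ∀ v ∈ Yt, P v = 0 → v = 0 := by
    intro v hv hPv
    refine hXker v (hYtY hv) ?_
    have := hPsub v
    rwa [hPv, sub_zero] at this
  have hinj : Function.Injective (P.comp Yt.subtype) := by
    rw [← LinearMap.ker_eq_bot, LinearMap.ker_eq_bot']
    intro m hm
    exact Subtype.ext (hPinj m.1 m.2 hm)
  have hmapP : Submodule.map P Yt = LinearMap.range (P.comp Yt.subtype) := by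
    rw [LinearMap.range_comp, Submodule.range_subtype]
  have hfrP : finrank ℂ (Submodule.map P Yt) = finrank ℂ Yt := by
    rw [hmapP]
    exact LinearMap.finrank_range_of_inj hinj
  -- map P Yt ≤ Xi
  have hmaple : Submodule.map P Yt ≤ Xi := by
    rintro w ⟨v, hv, rfl⟩
    refine aux_mem_span_of_inner x hx _ _ ?_
    intro j hj
    simp only [Set.mem_setOf_eq, not_lt] at hj
    by_cases hjp : (j : ℕ) < p
    · -- i ≤ j < p : use orthogonality to W and X
      have hxv : (inner ℂ (x j) v : ℂ) = 0 :=
        (aux_mem_orth_span_iff _ v).1 (hYtW hv) (x j) ⟨j, ⟨hj, hjp⟩, rfl⟩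
      have hsub : (inner ℂ (x j) (v - P v) : ℂ) = 0 := by
        have hxj : x j ∈ X := Submodule.subset_span ⟨j, hjp, rfl⟩
        exact (Submodule.mem_orthogonal X _).1 (hPsub v) (x j) hxj
      have : (inner ℂ (x j) (P v) : ℂ) = (inner ℂ (x j) v : ℂ) - inner ℂ (x j) (v - P v) := by
        rw [inner_sub_right]; ring
      rw [this, hxv, hsub, sub_zero]
    · -- j ≥ p : x j ⊥ X
      have hxjX : x j ∈ Xᗮ := by
        refine (aux_mem_orth_span_iff _ _).2 ?_
        rintro u ⟨k, hk, rfl⟩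
        exact hx.2 (fun h => hjp (by subst h; exact hk))
      have h0 : (inner ℂ (P v) (x j) : ℂ) = 0 :=
        (Submodule.mem_orthogonal X (x j)).1 hxjX (P v) (hPmem v)
      rw [← inner_conj_symm, h0, map_zero]
  -- finrank Yt = i
  have hdim : finrank ℂ Yt = i := by
    have h1 : finrank ℂ Yt ≤ i := by
      rw [← hfrP]
      exact (Submodule.finrank_mono hmaple).trans hXicard
    omega
  have hmapeq : Submodule.map P Yt = Xi := by
    refine Submodule.eq_of_le_of_finrank_le hmaple ?_
    rw [hfrP, hdim]
    exact hXicard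
  refine ⟨⟨hdim, hmapeq⟩, fun hf => ?_⟩
  -- f(A) part
  have hmatinner : ∀ (v : EuclideanSpace ℂ (Fin n)) (k : Fin n),
      (inner ℂ (x k) (matFun lam x f v) : ℂ) = (f (lam k) : ℂ) * inner ℂ (x k) v := by
    intro v k
    rw [matFun]
    simp only [LinearMap.sum_apply, LinearMap.smul_apply, LinearMap.smulRight_apply,
      ContinuousLinearMap.coe_coe, innerSL_apply_apply, inner_sum, inner_smul_right]
    rw [Finset.sum_eq_single k]
    · rw [orthonormal_iff_ite.1 hx]
      simp
    · intro b _ hb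
      rw [orthonormal_iff_ite.1 hx]
      simp [hb.symm]
    · simp
  have hFinj : ∀ v ∈ Yt, matFun lam x f v = 0 → v = 0 := by
    intro v hv hFv
    refine hXker v (hYtY hv) ?_
    refine (aux_mem_orth_span_iff _ v).2 ?_
    rintro u ⟨k, hk, rfl⟩
    simp only [Set.mem_setOf_eq] at hk
    by_cases hki : (k : ℕ) < i
    · have := hmatinner v k
      rw [hFv, inner_zero_right] at this
      have hfne : (f (lam k) : ℂ) ≠ 0 := by
        simpa using hf k hki
      exact (mul_eq_zero.1 this.symm).resolve_left hfne
    · exact (aux_mem_orth_span_iff _ v).1 (hYtW hv) (x k) ⟨k, ⟨Nat.le_of_not_lt hki, hk⟩, rfl⟩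
  have hinjF : Function.Injective ((matFun lam x f).comp Yt.subtype) := by
    rw [← LinearMap.ker_eq_bot, LinearMap.ker_eq_bot']
    intro m hm
    exact Subtype.ext (hFinj m.1 m.2 hm)
  have hmapF : Submodule.map (matFun lam x f) Yt
      = LinearMap.range ((matFun lam x f).comp Yt.subtype) := by
    rw [LinearMap.range_comp, Submodule.range_subtype]
  rw [hmapF, LinearMap.finrank_range_of_inj hinjF, hdim]
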